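/- Let G be a finite group, R a commutative Green functor for G, and X a finite G-set. The functor M ↦ M_X on R-Mackey modules, where M_X(Y) := M(Y × X), is its own left and right adjoint: there are natural isomorphisms R-Mac(M_X, N) ≅ R-Mac(M, N_X). -/

import Mathlib

/-- A Mackey functor for `G` in the `G`-set picture: a pair of functorialities
(`star` contravariant, `costar` covariant) on finite `G`-sets with common values `val`,
sending disjoint unions to direct sums and satisfying the pullback axiom. -/
structure MackeyFun (G : Type) [Group G] : Type 1 where
  val : (X : Type) → [Finite X] → [MulAction G X] → Type
  acg : ∀ (X : Type) [Finite X] [MulAction G X], AddCommGroup (val X)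
  star : ∀ {X Y : Type} [Finite X] [MulAction G X] [Finite Y] [MulAction G Y]
    (f : X → Y), (∀ (g : G) (x : X), f (g • x) = g • f x) → (val Y →+ val X)
  costar : ∀ {X Y : Type} [Finite X] [MulAction G X] [Finite Y] [MulAction G Y]
    (f : X → Y), (∀ (g : G) (x : X), f (g • x) = g • f x) → (val X →+ val Y)
  star_id : ∀ (X : Type) [Finite X] [MulAction G X]
    (h : ∀ (g : G) (x : X), id (g • x) = g • id x) (v : val X), star id h v = v
  star_comp : ∀ {X Y Z : Type} [Finite X] [MulAction G X] [Finite Y] [MulAction G Y]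
    [Finite Z] [MulAction G Z] (f : X → Y) (hf : ∀ g x, f (g • x) = g • f x)
    (k : Y → Z) (hk : ∀ g y, k (g • y) = g • k y)
    (hkf : ∀ (g : G) (x : X), (k ∘ f) (g • x) = g • (k ∘ f) x) (v : val Z),
    star f hf (star k hk v) = star (k ∘ f) hkf v
  costar_id : ∀ (X : Type) [Finite X] [MulAction G X]
    (h : ∀ (g : G) (x : X), id (g • x) = g • id x) (v : val X), costar id h v = v
  costar_comp : ∀ {X Y Z : Type} [Finite X] [MulAction G X] [Finite Y] [MulAction G Y]
    [Finite Z] [MulAction G Z] (f : X → Y) (hf : ∀ g x, f (g • x) = g • f x)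
    (k : Y → Z) (hk : ∀ g y, k (g • y) = g • k y)
    (hkf : ∀ (g : G) (x : X), (k ∘ f) (g • x) = g • (k ∘ f) x) (v : val X),
    costar k hk (costar f hf v) = costar (k ∘ f) hkf v
  additivity : ∀ {X Y : Type} [Finite X] [MulAction G X] [Finite Y] [MulAction G Y]
    (h₁ : ∀ (g : G) (x : X), (Sum.inl (g • x) : X ⊕ Y) = g • Sum.inl x)
    (h₂ : ∀ (g : G) (y : Y), (Sum.inr (g • y) : X ⊕ Y) = g • Sum.inr y),
    Function.Bijective
      (fun v : val (X ⊕ Y) => (star Sum.inl h₁ v, star Sum.inr h₂ v))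
  pullback : ∀ {X Y Z W : Type} [Finite X] [MulAction G X] [Finite Y] [MulAction G Y]
    [Finite Z] [MulAction G Z] [Finite W] [MulAction G W]
    (p : W → X) (hp : ∀ g w, p (g • w) = g • p w)
    (q : W → Y) (hq : ∀ g w, q (g • w) = g • q w)
    (f : X → Z) (hf : ∀ g x, f (g • x) = g • f x)
    (k : Y → Z) (hk : ∀ g y, k (g • y) = g • k y),
    (∀ w, f (p w) = k (q w)) →
    (∀ (x : X) (y : Y), f x = k y → ∃! w, p w = x ∧ q w = y) →
    ∀ v : val X, star k hk (costar f hf v) = costar q hq (star p hp v)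

attribute [instance] MackeyFun.acg

/-- A morphism of Mackey functors. -/
structure MackeyHom {G : Type} [Group G] (M N : MackeyFun G) where
  app : ∀ (X : Type) [Finite X] [MulAction G X], M.val X →+ N.val X
  nat_star : ∀ {X Y : Type} [Finite X] [MulAction G X] [Finite Y] [MulAction G Y]
    (f : X → Y) (hf : ∀ g x, f (g • x) = g • f x) (v : M.val Y),
    app X (M.star f hf v) = N.star f hf (app Y v)
  nat_costar : ∀ {X Y : Type} [Finite X] [MulAction G X] [Finite Y] [MulAction G Y]
    (f : X → Y) (hf : ∀ g x, f (g • x) = g • f x) (v : M.val X),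
    app Y (M.costar f hf v) = N.costar f hf (app X v)

/-- Composition of morphisms of Mackey functors. -/
def MackeyHom.comp {G : Type} [Group G] {M N P : MackeyFun G}
    (ψ : MackeyHom N P) (φ : MackeyHom M N) : MackeyHom M P where
  app X := (ψ.app X).comp (φ.app X)
  nat_star := by
    intro X Y _ _ _ _ f hf v
    simp [φ.nat_star f hf v, ψ.nat_star f hf (φ.app Y v)]
  nat_costar := by
    intro X Y _ _ _ _ f hf v
    simp [φ.nat_costar f hf v, ψ.nat_costar f hf (φ.app X v)]

/-- A commutative Green functor for `G` in the `G`-set picture: a Mackey functor with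
biadditive external products `mul : R(X) × R(Y) → R(X × Y)` and unit `one ∈ R(pt)`,
natural in both variables (for `star`), satisfying the Frobenius relations (naturality
for `costar`), associativity, unitality and commutativity. -/
structure GreenFun (G : Type) [Group G] extends MackeyFun G where
  mul : ∀ {X Y : Type} [Finite X] [MulAction G X] [Finite Y] [MulAction G Y],
    val X → val Y → val (X × Y)
  one : val PUnit
  mul_add_left : ∀ {X Y : Type} [Finite X] [MulAction G X] [Finite Y] [MulAction G Y]
    (r r' : val X) (s : val Y), mul (r + r') s = mul r s + mul r' s
  mul_add_right : ∀ {X Y : Type} [Finite X] [MulAction G X] [Finite Y] [MulAction G Y]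
    (r : val X) (s s' : val Y), mul r (s + s') = mul r s + mul r s'
  mul_star_left : ∀ {X X' Y : Type} [Finite X] [MulAction G X] [Finite X']
    [MulAction G X'] [Finite Y] [MulAction G Y] (f : X → X')
    (hf : ∀ g x, f (g • x) = g • f x)
    (hf' : ∀ (g : G) (p : X × Y), Prod.map f id (g • p) = g • Prod.map f id p)
    (r : val X') (s : val Y),
    mul (star f hf r) s = star (Prod.map f id) hf' (mul r s)
  mul_star_right : ∀ {X Y Y' : Type} [Finite X] [MulAction G X] [Finite Y]
    [MulAction G Y] [Finite Y'] [MulAction G Y'] (f : Y → Y')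
    (hf : ∀ g y, f (g • y) = g • f y)
    (hf' : ∀ (g : G) (p : X × Y), Prod.map id f (g • p) = g • Prod.map id f p)
    (r : val X) (s : val Y'),
    mul r (star f hf s) = star (Prod.map id f) hf' (mul r s)
  mul_costar_left : ∀ {X X' Y : Type} [Finite X] [MulAction G X] [Finite X']
    [MulAction G X'] [Finite Y] [MulAction G Y] (f : X → X')
    (hf : ∀ g x, f (g • x) = g • f x)
    (hf' : ∀ (g : G) (p : X × Y), Prod.map f id (g • p) = g • Prod.map f id p)
    (r : val X) (s : val Y),
    mul (costar f hf r) s = costar (Prod.map f id) hf' (mul r s)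
  mul_costar_right : ∀ {X Y Y' : Type} [Finite X] [MulAction G X] [Finite Y]
    [MulAction G Y] [Finite Y'] [MulAction G Y'] (f : Y → Y')
    (hf : ∀ g y, f (g • y) = g • f y)
    (hf' : ∀ (g : G) (p : X × Y), Prod.map id f (g • p) = g • Prod.map id f p)
    (r : val X) (s : val Y),
    mul r (costar f hf s) = costar (Prod.map id f) hf' (mul r s)
  mul_assoc : ∀ {X Y Z : Type} [Finite X] [MulAction G X] [Finite Y] [MulAction G Y]
    [Finite Z] [MulAction G Z]
    (hα : ∀ (g : G) (p : (X × Y) × Z),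
      (fun p : (X × Y) × Z => (p.1.1, (p.1.2, p.2))) (g • p) =
        g • (fun p : (X × Y) × Z => (p.1.1, (p.1.2, p.2))) p)
    (r : val X) (s : val Y) (t : val Z),
    mul (mul r s) t =
      star (fun p : (X × Y) × Z => (p.1.1, (p.1.2, p.2))) hα (mul r (mul s t))
  mul_one_left : ∀ {X : Type} [Finite X] [MulAction G X]
    (h : ∀ (g : G) (p : PUnit × X), (g • p).2 = g • p.2) (r : val X),
    mul one r = star (fun p : PUnit × X => p.2) h r
  mul_one_right : ∀ {X : Type} [Finite X] [MulAction G X]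
    (h : ∀ (g : G) (p : X × PUnit), (g • p).1 = g • p.1) (r : val X),
    mul r one = star (fun p : X × PUnit => p.1) h r
  mul_comm : ∀ {X Y : Type} [Finite X] [MulAction G X] [Finite Y] [MulAction G Y]
    (h : ∀ (g : G) (p : X × Y), Prod.swap (g • p) = g • Prod.swap p)
    (r : val X) (s : val Y),
    mul r s = star Prod.swap h (mul s r)

/-- A Mackey module over the Green functor `R`, in the `G`-set picture, with external
action `act : R(X) × M(Y) → M(X × Y)`. -/
structure RModule {G : Type} [Group G] (R : GreenFun G) extends MackeyFun G where
  act : ∀ {X Y : Type} [Finite X] [MulAction G X] [Finite Y] [MulAction G Y],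
    R.val X → val Y → val (X × Y)
  act_add_left : ∀ {X Y : Type} [Finite X] [MulAction G X] [Finite Y] [MulAction G Y]
    (r r' : R.val X) (m : val Y), act (r + r') m = act r m + act r' m
  act_add_right : ∀ {X Y : Type} [Finite X] [MulAction G X] [Finite Y] [MulAction G Y]
    (r : R.val X) (m m' : val Y), act r (m + m') = act r m + act r m'
  act_star_left : ∀ {X X' Y : Type} [Finite X] [MulAction G X] [Finite X']
    [MulAction G X'] [Finite Y] [MulAction G Y] (f : X → X')
    (hf : ∀ g x, f (g • x) = g • f x)
    (hf' : ∀ (g : G) (p : X × Y), Prod.map f id (g • p) = g • Prod.map f id p)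
    (r : R.val X') (m : val Y),
    act (R.star f hf r) m = star (Prod.map f id) hf' (act r m)
  act_star_right : ∀ {X Y Y' : Type} [Finite X] [MulAction G X] [Finite Y]
    [MulAction G Y] [Finite Y'] [MulAction G Y'] (f : Y → Y')
    (hf : ∀ g y, f (g • y) = g • f y)
    (hf' : ∀ (g : G) (p : X × Y), Prod.map id f (g • p) = g • Prod.map id f p)
    (r : R.val X) (m : val Y'),
    act r (star f hf m) = star (Prod.map id f) hf' (act r m)
  act_costar_left : ∀ {X X' Y : Type} [Finite X] [MulAction G X] [Finite X']
    [MulAction G X'] [Finite Y] [MulAction G Y] (f : X → X')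
    (hf : ∀ g x, f (g • x) = g • f x)
    (hf' : ∀ (g : G) (p : X × Y), Prod.map f id (g • p) = g • Prod.map f id p)
    (r : R.val X) (m : val Y),
    act (R.costar f hf r) m = costar (Prod.map f id) hf' (act r m)
  act_costar_right : ∀ {X Y Y' : Type} [Finite X] [MulAction G X] [Finite Y]
    [MulAction G Y] [Finite Y'] [MulAction G Y'] (f : Y → Y')
    (hf : ∀ g y, f (g • y) = g • f y)
    (hf' : ∀ (g : G) (p : X × Y), Prod.map id f (g • p) = g • Prod.map id f p)
    (r : R.val X) (m : val Y),
    act r (costar f hf m) = costar (Prod.map id f) hf' (act r m)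
  act_assoc : ∀ {X Y Z : Type} [Finite X] [MulAction G X] [Finite Y] [MulAction G Y]
    [Finite Z] [MulAction G Z]
    (hα : ∀ (g : G) (p : (X × Y) × Z),
      (fun p : (X × Y) × Z => (p.1.1, (p.1.2, p.2))) (g • p) =
        g • (fun p : (X × Y) × Z => (p.1.1, (p.1.2, p.2))) p)
    (r : R.val X) (s : R.val Y) (m : val Z),
    act (R.mul r s) m =
      star (fun p : (X × Y) × Z => (p.1.1, (p.1.2, p.2))) hα (act r (act s m))
  act_one : ∀ {X : Type} [Finite X] [MulAction G X]
    (h : ∀ (g : G) (p : PUnit × X), (g • p).2 = g • p.2) (m : val X),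
    act R.one m = star (fun p : PUnit × X => p.2) h m

/-- A morphism of `R`-Mackey modules. -/
structure RModHom {G : Type} [Group G] (R : GreenFun G) (M N : RModule R)
    extends MackeyHom M.toMackeyFun N.toMackeyFun where
  linear : ∀ {X Y : Type} [Finite X] [MulAction G X] [Finite Y] [MulAction G Y]
    (r : R.val X) (m : M.val Y), app (X × Y) (M.act r m) = N.act r (app Y m)

/-- Composition of morphisms of `R`-Mackey modules. -/
def RModHom.comp {G : Type} [Group G] {R : GreenFun G} {M N P : RModule R}
    (ψ : RModHom R N P) (φ : RModHom R M N) : RModHom R M P where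
  toMackeyHom := ψ.toMackeyHom.comp φ.toMackeyHom
  linear := by
    intro X Y _ _ _ _ r m
    show ψ.app _ (φ.app _ (M.act r m)) = P.act r (ψ.app Y (φ.app Y m))
    rw [φ.linear r m, ψ.linear r (φ.app Y m)]


section Helpers

variable {G : Type} [Group G]

namespace MackeyFun

variable (M : MackeyFun G)

theorem star_congr {A B : Type} [Finite A] [MulAction G A] [Finite B] [MulAction G B]
    {f f' : A → B} (h : f = f')
    (hf : ∀ (g : G) (a : A), f (g • a) = g • f a)
    (hf' : ∀ (g : G) (a : A), f' (g • a) = g • f' a) (v : M.val B) :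
    M.star f hf v = M.star f' hf' v := by subst h; rfl

theorem costar_congr {A B : Type} [Finite A] [MulAction G A] [Finite B] [MulAction G B]
    {f f' : A → B} (h : f = f')
    (hf : ∀ (g : G) (a : A), f (g • a) = g • f a)
    (hf' : ∀ (g : G) (a : A), f' (g • a) = g • f' a) (v : M.val A) :
    M.costar f hf v = M.costar f' hf' v := by subst h; rfl

theorem star_inv_left {A B : Type} [Finite A] [MulAction G A] [Finite B] [MulAction G B]
    (u : A → B) (hu : ∀ (g : G) (a : A), u (g • a) = g • u a)
    (w : B → A) (hw : ∀ (g : G) (b : B), w (g • b) = g • w b)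
    (h2 : ∀ b, u (w b) = b) (v : M.val B) :
    M.star w hw (M.star u hu v) = v := by
  have huw : ∀ (g : G) (b : B), (u ∘ w) (g • b) = g • (u ∘ w) b := by
    intro g b; simp only [Function.comp_apply, hw, hu]
  rw [M.star_comp w hw u hu huw v]
  rw [M.star_congr (show u ∘ w = id by funext b; exact h2 b) huw (fun _ _ => rfl) v]
  exact M.star_id B _ v

theorem star_bijective {A B : Type} [Finite A] [MulAction G A] [Finite B] [MulAction G B]
    (u : A → B) (hu : ∀ (g : G) (a : A), u (g • a) = g • u a)
    (w : B → A) (hw : ∀ (g : G) (b : B), w (g • b) = g • w b)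
    (h1 : ∀ a, w (u a) = a) (h2 : ∀ b, u (w b) = b) :
    Function.Bijective (M.star u hu) :=
  Function.bijective_iff_has_inverse.mpr
    ⟨M.star w hw, fun v => M.star_inv_left u hu w hw h2 v,
      fun v => M.star_inv_left w hw u hu h1 v⟩

/-- For an equivariant bijection, costar equals star of the inverse. -/
theorem costar_eq_star_inv {A B : Type} [Finite A] [MulAction G A] [Finite B] [MulAction G B]
    (u : A → B) (hu : ∀ (g : G) (a : A), u (g • a) = g • u a)
    (w : B → A) (hw : ∀ (g : G) (b : B), w (g • b) = g • w b)
    (h1 : ∀ a, w (u a) = a) (h2 : ∀ b, u (w b) = b) (v : M.val A) :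
    M.costar u hu v = M.star w hw v := by
  have key : M.star u hu (M.costar u hu v) = v := by
    have hpb := M.pullback (p := (id : A → A)) (hp := fun _ _ => rfl)
      (q := (id : A → A)) (hq := fun _ _ => rfl) (f := u) (hf := hu) (k := u) (hk := hu)
      (fun _ => rfl)
      (fun x y hxy => by
        refine ⟨x, ⟨rfl, ?_⟩, ?_⟩
        · have := congrArg w hxy; simpa [h1] using this
        · rintro z ⟨hz1, hz2⟩; simpa using hz1) v
    rw [hpb, M.star_id, M.costar_id]
  calc M.costar u hu v = M.star w hw (M.star u hu (M.costar u hu v)) :=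
        (M.star_inv_left u hu w hw h2 _).symm
    _ = M.star w hw v := by rw [key]

end MackeyFun

end Helpers


section Construction

variable {G : Type} [Group G] {R : GreenFun G}
variable (X : Type) [Finite X] [MulAction G X]

namespace Stmt15

/-- The Mackey module `M_X` with `M_X(A) = M(A × X)`. -/
def MXmod (M : RModule R) : RModule R where
  val A := M.val (A × X)
  acg A _ _ := M.acg (A × X)
  star {A B} _ _ _ _ f hf :=
    M.star (Prod.map f id : A × X → B × X) (fun g p => Prod.ext (hf g p.1) rfl)
  costar {A B} _ _ _ _ f hf :=
    M.costar (Prod.map f id : A × X → B × X) (fun g p => Prod.ext (hf g p.1) rfl)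
  star_id A _ _ h v := by
    refine (M.star_congr (f' := id) ?_ _ (fun _ _ => rfl) v).trans (M.star_id _ _ v)
    funext p; rfl
  star_comp {A B C} _ _ _ _ _ _ f hf k hk hkf v := by
    rw [M.star_comp (Prod.map f id : A × X → B × X) _ (Prod.map k id : B × X → C × X) _
      (fun g p => Prod.ext (hkf g p.1) rfl) v]
    exact M.star_congr (by funext p; rfl) _ _ v
  costar_id A _ _ h v := by
    refine (M.costar_congr (f' := id) ?_ _ (fun _ _ => rfl) v).trans (M.costar_id _ _ v)
    funext p; rfl
  costar_comp {A B C} _ _ _ _ _ _ f hf k hk hkf v := by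
    rw [M.costar_comp (Prod.map f id : A × X → B × X) _ (Prod.map k id : B × X → C × X) _
      (fun g p => Prod.ext (hkf g p.1) rfl) v]
    exact M.costar_congr (by funext p; rfl) _ _ v
  additivity {A B} _ _ _ _ h₁ h₂ := by
    have hbd : Function.Bijective
        (M.star (Sum.elim (fun q : A × X => (Sum.inl q.1, q.2))
          (fun q : B × X => (Sum.inr q.1, q.2)) : (A × X) ⊕ (B × X) → (A ⊕ B) × X)
          (fun g q => by cases q <;> rfl)) :=
      M.star_bijective _ _
        (fun p : (A ⊕ B) × X =>
          Sum.elim (fun a => Sum.inl (a, p.2)) (fun b => Sum.inr (b, p.2)) p.1)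
        (fun g p => by obtain ⟨s, x⟩ := p; cases s <;> rfl)
        (by rintro (⟨a, x⟩ | ⟨b, x⟩) <;> rfl)
        (by rintro ⟨a | b, x⟩ <;> rfl)
    have hadd := M.additivity (X := A × X) (Y := B × X)
      (fun g q => rfl) (fun g q => rfl)
    have heq : (fun v : M.val ((A ⊕ B) × X) =>
        (M.star (Prod.map Sum.inl id : A × X → (A ⊕ B) × X)
            (fun g p => Prod.ext (h₁ g p.1) rfl) v,
         M.star (Prod.map Sum.inr id : B × X → (A ⊕ B) × X)
            (fun g p => Prod.ext (h₂ g p.1) rfl) v)) =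
        (fun w : M.val ((A × X) ⊕ (B × X)) =>
          (M.star Sum.inl (fun g q => rfl) w, M.star Sum.inr (fun g q => rfl) w)) ∘
        (M.star (Sum.elim (fun q : A × X => (Sum.inl q.1, q.2))
          (fun q : B × X => (Sum.inr q.1, q.2))) (fun g q => by cases q <;> rfl)) := by
      funext v
      refine Prod.ext ?_ ?_ <;>
      · show _ = M.star _ _ (M.star _ _ v)
        refine Eq.trans ?_ (M.star_comp _ _ _ _ (fun g q => by rfl) v).symm
        exact M.star_congr (by funext q; rfl) _ _ v
    rw [heq]
    exact hadd.comp hbd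
  pullback {A B C W} _ _ _ _ _ _ _ _ p hp q hq f hf k hk hcomm hpb v := by
    refine M.pullback (Prod.map p id : W × X → A × X) _ (Prod.map q id : W × X → B × X) _
      (Prod.map f id : A × X → C × X) _ (Prod.map k id : B × X → C × X) _
      (fun w => Prod.ext (hcomm w.1) rfl) ?_ v
    rintro ⟨xa, xx⟩ ⟨ya, yx⟩ h
    obtain ⟨h1, h2⟩ : f xa = k ya ∧ xx = yx := by
      simpa [Prod.map, Prod.ext_iff] using h
    obtain ⟨w, ⟨hw1, hw2⟩, huniq⟩ := hpb xa ya h1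
    refine ⟨(w, xx), ⟨Prod.ext hw1 rfl, Prod.ext hw2 h2⟩, ?_⟩
    rintro ⟨w', x'⟩ ⟨ha, hb⟩
    obtain ⟨ha1, ha2⟩ : p w' = xa ∧ x' = xx := by simpa [Prod.map, Prod.ext_iff] using ha
    obtain ⟨hb1, _⟩ : q w' = ya ∧ x' = yx := by simpa [Prod.map, Prod.ext_iff] using hb
    exact Prod.ext (huniq w' ⟨ha1, hb1⟩) ha2
  act {A B} _ _ _ _ r m :=
    M.star (fun p : (A × B) × X => (p.1.1, (p.1.2, p.2))) (fun _ _ => rfl) (M.act r m)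
  act_add_left {A B} _ _ _ _ r r' m := by
    rw [M.act_add_left, map_add]
  act_add_right {A B} _ _ _ _ r m m' := by
    rw [M.act_add_right, map_add]
  act_star_left {A A' B} _ _ _ _ _ _ f hf hf' r m := by
    rw [M.act_star_left f hf (fun g p => Prod.ext (hf g p.1) rfl) r m,
      M.star_comp (f := fun p : (A × B) × X => (p.1.1, (p.1.2, p.2)))
        (k := (Prod.map f id : A × (B × X) → A' × (B × X))) _ _
        (fun g p => Prod.ext (hf g p.1.1) rfl) (M.act r m),
      M.star_comp (f := (Prod.map (Prod.map f id) id : (A × B) × X → (A' × B) × X))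
        (k := fun p : (A' × B) × X => (p.1.1, (p.1.2, p.2))) _ _
        (fun g p => Prod.ext (hf g p.1.1) rfl) (M.act r m)]
    exact M.star_congr (by funext p; rfl) _ _ (M.act r m)
  act_star_right {A B B'} _ _ _ _ _ _ f hf hf' r m := by
    rw [M.act_star_right (Prod.map f id : B × X → B' × X)
      (fun g q => Prod.ext (hf g q.1) rfl)
      (fun g p => Prod.ext rfl (Prod.ext (hf g p.2.1) rfl)) r m,
      M.star_comp (f := fun p : (A × B) × X => (p.1.1, (p.1.2, p.2)))
        (k := (Prod.map id (Prod.map f id) : A × (B × X) → A × (B' × X))) _ _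
        (fun g p => Prod.ext rfl (Prod.ext (hf g p.1.2) rfl)) (M.act r m),
      M.star_comp (f := (Prod.map (Prod.map id f) id : (A × B) × X → (A × B') × X))
        (k := fun p : (A × B') × X => (p.1.1, (p.1.2, p.2))) _ _
        (fun g p => Prod.ext rfl (Prod.ext (hf g p.1.2) rfl)) (M.act r m)]
    exact M.star_congr (by funext p; rfl) _ _ (M.act r m)
  act_costar_left {A A' B} _ _ _ _ _ _ f hf hf' r m := by
    rw [M.act_costar_left f hf (fun g p => Prod.ext (hf g p.1) rfl) r m]
    refine M.pullback (p := fun p : (A × B) × X => (p.1.1, (p.1.2, p.2))) (hp := fun _ _ => rfl)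
      (q := (Prod.map (Prod.map f id) id : (A × B) × X → (A' × B) × X))
      (hq := fun g p => Prod.ext (Prod.ext (hf g p.1.1) rfl) rfl)
      (f := (Prod.map f id : A × (B × X) → A' × (B × X)))
      (hf := fun g p => Prod.ext (hf g p.1) rfl)
      (k := fun p : (A' × B) × X => (p.1.1, (p.1.2, p.2))) (hk := fun _ _ => rfl)
      (fun w => rfl) ?_ (M.act r m)
    rintro ⟨xa, xb, xx⟩ ⟨⟨ya, yb⟩, yx⟩ h
    obtain ⟨h1, h2, h3⟩ : f xa = ya ∧ xb = yb ∧ xx = yx := by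
      simpa [Prod.map, Prod.ext_iff] using h
    refine ⟨((xa, xb), xx), ⟨rfl, by simp [Prod.map, h1, h2, h3]⟩, ?_⟩
    rintro ⟨⟨wa, wb⟩, wx⟩ ⟨ha, hb⟩
    obtain ⟨ha1, ha2, ha3⟩ : wa = xa ∧ wb = xb ∧ wx = xx := by
      simpa [Prod.ext_iff] using ha
    simp [ha1, ha2, ha3]
  act_costar_right {A B B'} _ _ _ _ _ _ f hf hf' r m := by
    rw [M.act_costar_right (Prod.map f id : B × X → B' × X)
      (fun g q => Prod.ext (hf g q.1) rfl)
      (fun g p => Prod.ext rfl (Prod.ext (hf g p.2.1) rfl)) r m]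
    refine M.pullback (p := fun p : (A × B) × X => (p.1.1, (p.1.2, p.2))) (hp := fun _ _ => rfl)
      (q := (Prod.map (Prod.map id f) id : (A × B) × X → (A × B') × X))
      (hq := fun g p => Prod.ext (Prod.ext rfl (hf g p.1.2)) rfl)
      (f := (Prod.map id (Prod.map f id) : A × (B × X) → A × (B' × X)))
      (hf := fun g p => Prod.ext rfl (Prod.ext (hf g p.2.1) rfl))
      (k := fun p : (A × B') × X => (p.1.1, (p.1.2, p.2))) (hk := fun _ _ => rfl)
      (fun w => rfl) ?_ (M.act r m)
    rintro ⟨xa, xb, xx⟩ ⟨⟨ya, yb⟩, yx⟩ h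
    obtain ⟨h1, h2, h3⟩ : xa = ya ∧ f xb = yb ∧ xx = yx := by
      simpa [Prod.map, Prod.ext_iff] using h
    refine ⟨((xa, xb), xx), ⟨rfl, by simp [Prod.map, h1, h2, h3]⟩, ?_⟩
    rintro ⟨⟨wa, wb⟩, wx⟩ ⟨ha, hb⟩
    obtain ⟨ha1, ha2, ha3⟩ : wa = xa ∧ wb = xb ∧ wx = xx := by
      simpa [Prod.ext_iff] using ha
    simp [ha1, ha2, ha3]
  act_assoc {A B C} _ _ _ _ _ _ hα r s m := by
    rw [M.act_assoc (fun _ _ => rfl) r s m,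
      M.star_comp (f := fun p : ((A × B) × C) × X => (p.1.1, (p.1.2, p.2)))
        (k := fun p : (A × B) × (C × X) => (p.1.1, (p.1.2, p.2))) _ _
        (fun _ _ => rfl) (M.act r (M.act s m)),
      M.act_star_right (f := fun p : (B × C) × X => (p.1.1, (p.1.2, p.2)))
        (hf := fun _ _ => rfl) (hf' := fun _ _ => rfl) (r := r) (m := M.act s m),
      M.star_comp (f := fun p : (A × (B × C)) × X => (p.1.1, (p.1.2, p.2)))
        (k := (Prod.map id (fun p : (B × C) × X => (p.1.1, (p.1.2, p.2))) :
          A × ((B × C) × X) → A × (B × (C × X)))) _ _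
        (fun _ _ => rfl) (M.act r (M.act s m)),
      M.star_comp (f := (Prod.map (fun p : (A × B) × C => (p.1.1, (p.1.2, p.2))) id :
          ((A × B) × C) × X → (A × (B × C)) × X))
        (k := ((Prod.map id (fun p : (B × C) × X => (p.1.1, (p.1.2, p.2))) :
            A × ((B × C) × X) → A × (B × (C × X))) ∘
          fun p : (A × (B × C)) × X => (p.1.1, (p.1.2, p.2)))) _ _
        (fun _ _ => rfl) (M.act r (M.act s m))]
    exact M.star_congr (by funext p; rfl) _ _ (M.act r (M.act s m))
  act_one {A} _ _ h m := by
    rw [M.act_one (fun _ _ => rfl) m,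
      M.star_comp (f := fun p : (PUnit × A) × X => (p.1.1, (p.1.2, p.2)))
        (k := fun p : PUnit × (A × X) => p.2) _ _ (fun _ _ => rfl) m]
    exact M.star_congr (by funext p; rfl) _ _ m


theorem hom_ext {M N : RModule R} {φ ψ : RModHom R M N}
    (h : ∀ (A : Type) [Finite A] [MulAction G A] (v : M.val A), φ.app A v = ψ.app A v) :
    φ = ψ := by
  obtain ⟨⟨fapp, hs, hc⟩, hl⟩ := φ
  obtain ⟨⟨gapp, hs', hc'⟩, hl'⟩ := ψ
  have : fapp = gapp := by
    funext A _ _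
    exact AddMonoidHom.ext fun v => h A v
  subst this
  rfl

/-- The hom action of `M ↦ M_X`. -/
def MXmap {M N : RModule R} (φ : RModHom R M N) : RModHom R (MXmod X M) (MXmod X N) where
  app A _ _ := φ.app (A × X)
  nat_star {A B} _ _ _ _ f hf v :=
    φ.nat_star (Prod.map f id : A × X → B × X) (fun g p => Prod.ext (hf g p.1) rfl) v
  nat_costar {A B} _ _ _ _ f hf v :=
    φ.nat_costar (Prod.map f id : A × X → B × X) (fun g p => Prod.ext (hf g p.1) rfl) v
  linear {A B} _ _ _ _ r m := by
    show φ.app ((A × B) × X)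
        (M.star (fun p : (A × B) × X => (p.1.1, (p.1.2, p.2))) (fun _ _ => rfl) (M.act r m)) = _
    rw [φ.nat_star (fun p : (A × B) × X => (p.1.1, (p.1.2, p.2))) (fun _ _ => rfl) (M.act r m),
      φ.linear r m]
    rfl

/-- Forward direction of the self-adjunction. -/
def adjFun {M N : RModule R} (θ : RModHom R (MXmod X M) N) : RModHom R M (MXmod X N) where
  app A _ _ := (θ.app (A × X)).comp
    ((M.costar (fun u : A × X => (u, u.2)) (fun _ _ => rfl)).comp
      (M.star (Prod.fst : A × X → A) (fun _ _ => rfl)))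
  nat_star {A B} _ _ _ _ f hf v := by
    show θ.app (A × X) (M.costar (fun u : A × X => (u, u.2)) (fun _ _ => rfl)
      (M.star (Prod.fst : A × X → A) (fun _ _ => rfl) (M.star f hf v))) = _
    have h1 : M.star (Prod.fst : A × X → A) (fun _ _ => rfl) (M.star f hf v)
        = M.star (Prod.map f id : A × X → B × X) (fun g p => Prod.ext (hf g p.1) rfl)
            (M.star (Prod.fst : B × X → B) (fun _ _ => rfl) v) := by
      rw [M.star_comp (f := (Prod.fst : A × X → A)) (k := f) _ _ (fun g u => hf g u.1) v,
        M.star_comp (f := (Prod.map f id : A × X → B × X)) (k := (Prod.fst : B × X → B)) _ _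
          (fun g u => hf g u.1) v]
      exact M.star_congr (by funext u; rfl) _ _ v
    have h2 : M.costar (fun u : A × X => (u, u.2)) (fun _ _ => rfl)
        (M.star (Prod.map f id : A × X → B × X) (fun g p => Prod.ext (hf g p.1) rfl)
          (M.star (Prod.fst : B × X → B) (fun _ _ => rfl) v))
        = M.star (Prod.map (Prod.map f id) id : (A × X) × X → (B × X) × X)
            (fun g p => Prod.ext (Prod.ext (hf g p.1.1) rfl) rfl)
            (M.costar (fun u : B × X => (u, u.2)) (fun _ _ => rfl)
              (M.star (Prod.fst : B × X → B) (fun _ _ => rfl) v)) := by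
      refine (M.pullback (p := (Prod.map f id : A × X → B × X))
        (hp := fun g p => Prod.ext (hf g p.1) rfl)
        (q := fun u : A × X => (u, u.2)) (hq := fun _ _ => rfl)
        (f := fun u : B × X => (u, u.2)) (hf := fun _ _ => rfl)
        (k := (Prod.map (Prod.map f id) id : (A × X) × X → (B × X) × X))
        (hk := fun g p => Prod.ext (Prod.ext (hf g p.1.1) rfl) rfl)
        (fun w => rfl) ?_ _).symm
      rintro ⟨xb, xx⟩ ⟨⟨ya, yx1⟩, yx2⟩ h
      obtain ⟨h1, h2, h3⟩ : xb = f ya ∧ xx = yx1 ∧ xx = yx2 := by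
        simpa [Prod.map, Prod.ext_iff, and_assoc] using h
      refine ⟨(ya, yx1), ⟨by simp [Prod.map, h1, h2], by simp [h3, ← h2]⟩, ?_⟩
      rintro ⟨wa, wx⟩ ⟨ha, hb⟩
      obtain ⟨hb1, hb2, _⟩ : wa = ya ∧ wx = yx1 ∧ wx = yx2 := by
        simpa [Prod.ext_iff, and_assoc] using hb
      simp [hb1, hb2]
    rw [h1, h2]
    exact θ.nat_star (Prod.map f id : A × X → B × X) (fun g p => Prod.ext (hf g p.1) rfl)
      (M.costar (fun u : B × X => (u, u.2)) (fun _ _ => rfl)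
        (M.star (Prod.fst : B × X → B) (fun _ _ => rfl) v))
  nat_costar {A B} _ _ _ _ f hf v := by
    show θ.app (B × X) (M.costar (fun u : B × X => (u, u.2)) (fun _ _ => rfl)
      (M.star (Prod.fst : B × X → B) (fun _ _ => rfl) (M.costar f hf v))) = _
    have h1 : M.star (Prod.fst : B × X → B) (fun _ _ => rfl) (M.costar f hf v)
        = M.costar (Prod.map f id : A × X → B × X) (fun g p => Prod.ext (hf g p.1) rfl)
            (M.star (Prod.fst : A × X → A) (fun _ _ => rfl) v) := by
      refine M.pullback (p := (Prod.fst : A × X → A)) (hp := fun _ _ => rfl)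
        (q := (Prod.map f id : A × X → B × X)) (hq := fun g p => Prod.ext (hf g p.1) rfl)
        (f := f) (hf := hf) (k := (Prod.fst : B × X → B)) (hk := fun _ _ => rfl)
        (fun w => rfl) ?_ v
      rintro x ⟨yb, yx⟩ h
      refine ⟨(x, yx), ⟨rfl, Prod.ext h rfl⟩, ?_⟩
      rintro ⟨wa, wx⟩ ⟨ha, hb⟩
      obtain ⟨hb1, hb2⟩ : f wa = yb ∧ wx = yx := by simpa [Prod.map, Prod.ext_iff] using hb
      simp_all
    have h2 : M.costar (fun u : B × X => (u, u.2)) (fun _ _ => rfl)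
        (M.costar (Prod.map f id : A × X → B × X) (fun g p => Prod.ext (hf g p.1) rfl)
          (M.star (Prod.fst : A × X → A) (fun _ _ => rfl) v))
        = M.costar (Prod.map (Prod.map f id) id : (A × X) × X → (B × X) × X)
            (fun g p => Prod.ext (Prod.ext (hf g p.1.1) rfl) rfl)
            (M.costar (fun u : A × X => (u, u.2)) (fun _ _ => rfl)
              (M.star (Prod.fst : A × X → A) (fun _ _ => rfl) v)) := by
      rw [M.costar_comp (f := (Prod.map f id : A × X → B × X)) (k := fun u : B × X => (u, u.2))
          _ _ (fun g u => Prod.ext (Prod.ext (hf g u.1) rfl) rfl) _,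
        M.costar_comp (f := fun u : A × X => (u, u.2))
          (k := (Prod.map (Prod.map f id) id : (A × X) × X → (B × X) × X))
          _ _ (fun g u => Prod.ext (Prod.ext (hf g u.1) rfl) rfl) _]
      exact M.costar_congr (by funext u; rfl) _ _ _
    rw [h1, h2]
    exact θ.nat_costar (Prod.map f id : A × X → B × X) (fun g p => Prod.ext (hf g p.1) rfl)
      (M.costar (fun u : A × X => (u, u.2)) (fun _ _ => rfl)
        (M.star (Prod.fst : A × X → A) (fun _ _ => rfl) v))
  linear {A B} _ _ _ _ r m := by
    show θ.app ((A × B) × X) (M.costar (fun w : (A × B) × X => (w, w.2)) (fun _ _ => rfl)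
      (M.star (Prod.fst : (A × B) × X → A × B) (fun _ _ => rfl) (M.act r m))) = _
    have key : M.star (Prod.map (fun p : (A × B) × X => (p.1.1, (p.1.2, p.2))) id :
          ((A × B) × X) × X → (A × (B × X)) × X)
          (fun _ _ => rfl)
          (M.star (fun p : (A × (B × X)) × X => (p.1.1, (p.1.2, p.2))) (fun _ _ => rfl)
            (M.act r (M.costar (fun u : B × X => (u, u.2)) (fun _ _ => rfl)
              (M.star (Prod.fst : B × X → B) (fun _ _ => rfl) m))))
        = M.costar (fun w : (A × B) × X => (w, w.2)) (fun _ _ => rfl)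
            (M.star (Prod.fst : (A × B) × X → A × B) (fun _ _ => rfl) (M.act r m)) := by
      rw [M.act_costar_right (f := fun u : B × X => (u, u.2)) (hf := fun _ _ => rfl)
          (hf' := fun _ _ => rfl) (r := r),
        M.act_star_right (f := (Prod.fst : B × X → B)) (hf := fun _ _ => rfl)
          (hf' := fun _ _ => rfl) (r := r) (m := m)]
      rw [M.pullback (p := (id : A × (B × X) → A × (B × X))) (hp := fun _ _ => rfl)
        (q := fun u : A × (B × X) => (u, u.2.2)) (hq := fun _ _ => rfl)
        (f := (Prod.map id (fun u : B × X => (u, u.2)) :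
          A × (B × X) → A × ((B × X) × X))) (hf := fun _ _ => rfl)
        (k := fun p : (A × (B × X)) × X => (p.1.1, (p.1.2, p.2))) (hk := fun _ _ => rfl)
        (fun w => rfl)
        (by
          rintro ⟨xa, xb, xx⟩ ⟨⟨ya, yb, yx1⟩, yx2⟩ h
          obtain ⟨h1, h2, h3, h4⟩ : xa = ya ∧ xb = yb ∧ xx = yx1 ∧ xx = yx2 := by
            simpa [Prod.map, Prod.ext_iff, and_assoc] using h
          refine ⟨(xa, xb, xx), ⟨rfl, by simp [h1, h2, ← h3, ← h4]⟩, ?_⟩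
          rintro ⟨wa, wb, wx⟩ ⟨ha, hb⟩
          simpa using ha) _]
      rw [M.star_id]
      rw [M.pullback (p := fun p : (A × B) × X => (p.1.1, (p.1.2, p.2)))
        (hp := fun _ _ => rfl)
        (q := fun w : (A × B) × X => (w, w.2)) (hq := fun _ _ => rfl)
        (f := fun u : A × (B × X) => (u, u.2.2)) (hf := fun _ _ => rfl)
        (k := (Prod.map (fun p : (A × B) × X => (p.1.1, (p.1.2, p.2))) id :
          ((A × B) × X) × X → (A × (B × X)) × X)) (hk := fun _ _ => rfl)
        (fun w => rfl)
        (by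
          rintro ⟨xa, xb, xx⟩ ⟨⟨⟨ya, yb⟩, yx1⟩, yx2⟩ h
          obtain ⟨h1, h2, h3, h4⟩ : xa = ya ∧ xb = yb ∧ xx = yx1 ∧ xx = yx2 := by
            simpa [Prod.map, Prod.ext_iff, and_assoc] using h
          refine ⟨((xa, xb), xx), ⟨rfl, by simp [h1, h2, ← h3, ← h4]⟩, ?_⟩
          rintro ⟨⟨wa, wb⟩, wx⟩ ⟨ha, hb⟩
          obtain ⟨ha1, ha2, ha3⟩ : wa = xa ∧ wb = xb ∧ wx = xx := by
            simpa [Prod.ext_iff] using ha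
          simp [ha1, ha2, ha3]) _]
      rw [M.star_comp (f := fun p : (A × B) × X => (p.1.1, (p.1.2, p.2)))
        (k := (Prod.map id (Prod.fst : B × X → B) : A × (B × X) → A × B)) _ _
        (fun _ _ => rfl) (M.act r m)]
      exact congrArg (fun t => M.costar (fun w : (A × B) × X => (w, w.2)) (fun _ _ => rfl) t)
        (M.star_congr (by funext w; rfl) _ _ (M.act r m))
    refine (congrArg (fun t => θ.app ((A × B) × X) t) key.symm).trans ?_
    refine Eq.trans (θ.nat_star (f := fun p : (A × B) × X => (p.1.1, (p.1.2, p.2)))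
      (fun _ _ => rfl)
      (M.star (fun p : (A × (B × X)) × X => (p.1.1, (p.1.2, p.2))) (fun _ _ => rfl)
        (M.act r (M.costar (fun u : B × X => (u, u.2)) (fun _ _ => rfl)
          (M.star (Prod.fst : B × X → B) (fun _ _ => rfl) m))))) ?_
    exact congrArg
      (fun t : N.val (A × (B × X)) =>
        N.star (fun p : (A × B) × X => (p.1.1, (p.1.2, p.2))) (fun _ _ => rfl) t)
      (θ.linear (Y := B × X) r (M.costar (fun u : B × X => (u, u.2)) (fun _ _ => rfl)
        (M.star (Prod.fst : B × X → B) (fun _ _ => rfl) m)))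


/-- Backward direction of the self-adjunction. -/
def adjInv {M N : RModule R} (φ : RModHom R M (MXmod X N)) : RModHom R (MXmod X M) N where
  app A _ _ := ((N.costar (Prod.fst : A × X → A) (fun _ _ => rfl)).comp
    (N.star (fun u : A × X => (u, u.2)) (fun _ _ => rfl))).comp (φ.app (A × X))
  nat_star {A B} _ _ _ _ f hf v := by
    show N.costar (Prod.fst : A × X → A) (fun _ _ => rfl)
      (N.star (fun u : A × X => (u, u.2)) (fun _ _ => rfl)
        (φ.app (A × X) (M.star (Prod.map f id : A × X → B × X)
          (fun g p => Prod.ext (hf g p.1) rfl) v))) = _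
    rw [φ.nat_star (Prod.map f id : A × X → B × X) (fun g p => Prod.ext (hf g p.1) rfl) v]
    rw [show (MXmod X N).star (Prod.map f id : A × X → B × X)
        (fun g p => Prod.ext (hf g p.1) rfl) (φ.app (B × X) v)
      = N.star (Prod.map (Prod.map f id) id : (A × X) × X → (B × X) × X)
          (fun g p => Prod.ext (Prod.ext (hf g p.1.1) rfl) rfl) (φ.app (B × X) v) from rfl]
    have h1 : N.star (fun u : A × X => (u, u.2)) (fun _ _ => rfl)
        (N.star (Prod.map (Prod.map f id) id : (A × X) × X → (B × X) × X)
          (fun g p => Prod.ext (Prod.ext (hf g p.1.1) rfl) rfl) (φ.app (B × X) v))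
        = N.star (Prod.map f id : A × X → B × X) (fun g p => Prod.ext (hf g p.1) rfl)
            (N.star (fun u : B × X => (u, u.2)) (fun _ _ => rfl) (φ.app (B × X) v)) := by
      rw [N.star_comp (f := fun u : A × X => (u, u.2))
          (k := (Prod.map (Prod.map f id) id : (A × X) × X → (B × X) × X)) _ _
          (fun g u => Prod.ext (Prod.ext (hf g u.1) rfl) rfl) (φ.app (B × X) v),
        N.star_comp (f := (Prod.map f id : A × X → B × X)) (k := fun u : B × X => (u, u.2))
          _ _ (fun g u => Prod.ext (Prod.ext (hf g u.1) rfl) rfl) (φ.app (B × X) v)]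
      exact N.star_congr (by funext u; rfl) _ _ _
    rw [h1]
    refine (N.pullback (p := (Prod.map f id : A × X → B × X))
      (hp := fun g p => Prod.ext (hf g p.1) rfl)
      (q := (Prod.fst : A × X → A)) (hq := fun _ _ => rfl)
      (f := (Prod.fst : B × X → B)) (hf := fun _ _ => rfl)
      (k := f) (hk := hf) (fun w => rfl) ?_
      (N.star (fun u : B × X => (u, u.2)) (fun _ _ => rfl) (φ.app (B × X) v))).symm
    rintro ⟨xb, xx⟩ y h
    refine ⟨(y, xx), ⟨Prod.ext h.symm rfl, rfl⟩, ?_⟩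
    rintro ⟨wa, wx⟩ ⟨ha, hb⟩
    obtain ⟨ha1, ha2⟩ : f wa = xb ∧ wx = xx := by simpa [Prod.map, Prod.ext_iff] using ha
    simp_all
  nat_costar {A B} _ _ _ _ f hf v := by
    show N.costar (Prod.fst : B × X → B) (fun _ _ => rfl)
      (N.star (fun u : B × X => (u, u.2)) (fun _ _ => rfl)
        (φ.app (B × X) (M.costar (Prod.map f id : A × X → B × X)
          (fun g p => Prod.ext (hf g p.1) rfl) v))) = _
    rw [φ.nat_costar (Prod.map f id : A × X → B × X) (fun g p => Prod.ext (hf g p.1) rfl) v]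
    rw [show (MXmod X N).costar (Prod.map f id : A × X → B × X)
        (fun g p => Prod.ext (hf g p.1) rfl) (φ.app (A × X) v)
      = N.costar (Prod.map (Prod.map f id) id : (A × X) × X → (B × X) × X)
          (fun g p => Prod.ext (Prod.ext (hf g p.1.1) rfl) rfl) (φ.app (A × X) v) from rfl]
    rw [N.pullback (p := fun u : A × X => (u, u.2)) (hp := fun _ _ => rfl)
      (q := (Prod.map f id : A × X → B × X)) (hq := fun g p => Prod.ext (hf g p.1) rfl)
      (f := (Prod.map (Prod.map f id) id : (A × X) × X → (B × X) × X))
      (hf := fun g p => Prod.ext (Prod.ext (hf g p.1.1) rfl) rfl)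
      (k := fun u : B × X => (u, u.2)) (hk := fun _ _ => rfl)
      (fun w => rfl)
      (by
        rintro ⟨⟨xa, xx1⟩, xx2⟩ ⟨yb, yx⟩ h
        obtain ⟨h1, h2, h3⟩ : f xa = yb ∧ xx1 = yx ∧ xx2 = yx := by
          simpa [Prod.map, Prod.ext_iff, and_assoc] using h
        refine ⟨(xa, xx1), ⟨by simp [h2, h3], by simp [Prod.map, h1, h2]⟩, ?_⟩
        rintro ⟨wa, wx⟩ ⟨ha, hb⟩
        obtain ⟨ha1, ha2, _⟩ : wa = xa ∧ wx = xx1 ∧ wx = xx2 := by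
          simpa [Prod.ext_iff, and_assoc] using ha
        simp [ha1, ha2]) (φ.app (A × X) v)]
    rw [N.costar_comp (f := (Prod.map f id : A × X → B × X))
        (k := (Prod.fst : B × X → B)) _ _ (fun g u => hf g u.1) _,
      N.costar_congr (f' := (f ∘ (Prod.fst : A × X → A))) (by funext u; rfl) _
        (fun g u => hf g u.1) _,
      ← N.costar_comp (Prod.fst : A × X → A) (fun _ _ => rfl) f hf (fun g u => hf g u.1)
        (N.star (fun u : A × X => (u, u.2)) (fun _ _ => rfl) (φ.app (A × X) v))]
    rfl
  linear {A B} _ _ _ _ r m := by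
    show N.costar (Prod.fst : (A × B) × X → A × B) (fun _ _ => rfl)
      (N.star (fun w : (A × B) × X => (w, w.2)) (fun _ _ => rfl)
        (φ.app ((A × B) × X)
          (M.star (fun p : (A × B) × X => (p.1.1, (p.1.2, p.2))) (fun _ _ => rfl)
            (M.act r m)))) = _
    rw [φ.nat_star (fun p : (A × B) × X => (p.1.1, (p.1.2, p.2))) (fun _ _ => rfl) (M.act r m),
      φ.linear r m]
    rw [show (MXmod X N).star (fun p : (A × B) × X => (p.1.1, (p.1.2, p.2))) (fun _ _ => rfl)
        ((MXmod X N).act r (φ.app (B × X) m))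
      = N.star (Prod.map (fun p : (A × B) × X => (p.1.1, (p.1.2, p.2))) id :
            ((A × B) × X) × X → (A × (B × X)) × X) (fun _ _ => rfl)
          (N.star (fun p : (A × (B × X)) × X => (p.1.1, (p.1.2, p.2))) (fun _ _ => rfl)
            (N.act r (φ.app (B × X) m))) from rfl]
    have h1 : N.star (fun w : (A × B) × X => (w, w.2)) (fun _ _ => rfl)
        (N.star (Prod.map (fun p : (A × B) × X => (p.1.1, (p.1.2, p.2))) id :
            ((A × B) × X) × X → (A × (B × X)) × X) (fun _ _ => rfl)
          (N.star (fun p : (A × (B × X)) × X => (p.1.1, (p.1.2, p.2))) (fun _ _ => rfl)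
            (N.act r (φ.app (B × X) m))))
        = N.star (fun p : (A × B) × X => (p.1.1, (p.1.2, p.2))) (fun _ _ => rfl)
            (N.star (Prod.map id (fun u : B × X => (u, u.2)) : A × (B × X) → A × ((B × X) × X))
              (fun _ _ => rfl) (N.act r (φ.app (B × X) m))) := by
      rw [N.star_comp (f := fun w : (A × B) × X => (w, w.2))
          (k := (Prod.map (fun p : (A × B) × X => (p.1.1, (p.1.2, p.2))) id :
            ((A × B) × X) × X → (A × (B × X)) × X)) _ _ (fun _ _ => rfl) _,
        N.star_comp (f := ((Prod.map (fun p : (A × B) × X => (p.1.1, (p.1.2, p.2))) id :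
            ((A × B) × X) × X → (A × (B × X)) × X) ∘ fun w : (A × B) × X => (w, w.2)))
          (k := fun p : (A × (B × X)) × X => (p.1.1, (p.1.2, p.2))) _ _ (fun _ _ => rfl) _,
        N.star_comp (f := fun p : (A × B) × X => (p.1.1, (p.1.2, p.2)))
          (k := (Prod.map id (fun u : B × X => (u, u.2)) : A × (B × X) → A × ((B × X) × X)))
          _ _ (fun _ _ => rfl) _]
      exact N.star_congr (by funext w; rfl) _ _ _
    rw [h1]
    have h2 : N.costar (Prod.fst : (A × B) × X → A × B) (fun _ _ => rfl)
        (N.star (fun p : (A × B) × X => (p.1.1, (p.1.2, p.2))) (fun _ _ => rfl)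
          (N.star (Prod.map id (fun u : B × X => (u, u.2)) : A × (B × X) → A × ((B × X) × X))
            (fun _ _ => rfl) (N.act r (φ.app (B × X) m))))
        = N.costar (Prod.map id (Prod.fst : B × X → B) : A × (B × X) → A × B) (fun _ _ => rfl)
            (N.star (Prod.map id (fun u : B × X => (u, u.2)) : A × (B × X) → A × ((B × X) × X))
              (fun _ _ => rfl) (N.act r (φ.app (B × X) m))) := by
      have hca : N.costar (fun p : (A × B) × X => (p.1.1, (p.1.2, p.2))) (fun _ _ => rfl)
          (N.star (fun p : (A × B) × X => (p.1.1, (p.1.2, p.2))) (fun _ _ => rfl)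
            (N.star (Prod.map id (fun u : B × X => (u, u.2)) : A × (B × X) → A × ((B × X) × X))
              (fun _ _ => rfl) (N.act r (φ.app (B × X) m))))
          = N.star (Prod.map id (fun u : B × X => (u, u.2)) : A × (B × X) → A × ((B × X) × X))
              (fun _ _ => rfl) (N.act r (φ.app (B × X) m)) := by
        rw [N.costar_eq_star_inv (fun p : (A × B) × X => (p.1.1, (p.1.2, p.2))) (fun _ _ => rfl)
          (fun u : A × (B × X) => ((u.1, u.2.1), u.2.2)) (fun _ _ => rfl)
          (fun _ => rfl) (fun _ => rfl)]
        exact N.star_inv_left (fun p : (A × B) × X => (p.1.1, (p.1.2, p.2))) (fun _ _ => rfl)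
          (fun u : A × (B × X) => ((u.1, u.2.1), u.2.2)) (fun _ _ => rfl) (fun _ => rfl) _
      calc N.costar (Prod.fst : (A × B) × X → A × B) (fun _ _ => rfl)
            (N.star (fun p : (A × B) × X => (p.1.1, (p.1.2, p.2))) (fun _ _ => rfl)
              (N.star (Prod.map id (fun u : B × X => (u, u.2)) :
                A × (B × X) → A × ((B × X) × X)) (fun _ _ => rfl)
                (N.act r (φ.app (B × X) m))))
          = N.costar ((Prod.map id (Prod.fst : B × X → B) : A × (B × X) → A × B) ∘
              fun p : (A × B) × X => (p.1.1, (p.1.2, p.2))) (fun _ _ => rfl)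
              (N.star (fun p : (A × B) × X => (p.1.1, (p.1.2, p.2))) (fun _ _ => rfl)
                (N.star (Prod.map id (fun u : B × X => (u, u.2)) :
                  A × (B × X) → A × ((B × X) × X)) (fun _ _ => rfl)
                  (N.act r (φ.app (B × X) m)))) :=
            N.costar_congr (by funext w; rfl) _ _ _
        _ = N.costar (Prod.map id (Prod.fst : B × X → B) : A × (B × X) → A × B)
              (fun _ _ => rfl)
              (N.costar (fun p : (A × B) × X => (p.1.1, (p.1.2, p.2))) (fun _ _ => rfl)
                (N.star (fun p : (A × B) × X => (p.1.1, (p.1.2, p.2))) (fun _ _ => rfl)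
                  (N.star (Prod.map id (fun u : B × X => (u, u.2)) :
                    A × (B × X) → A × ((B × X) × X)) (fun _ _ => rfl)
                    (N.act r (φ.app (B × X) m))))) :=
            (N.costar_comp (f := fun p : (A × B) × X => (p.1.1, (p.1.2, p.2)))
              (k := (Prod.map id (Prod.fst : B × X → B) : A × (B × X) → A × B)) _ _
              (fun _ _ => rfl) _).symm
        _ = _ := congrArg (fun t : N.val (A × (B × X)) =>
              N.costar (Prod.map id (Prod.fst : B × X → B) : A × (B × X) → A × B)
                (fun _ _ => rfl) t) hca
    rw [h2]
    show N.costar (Prod.map id (Prod.fst : B × X → B) : A × (B × X) → A × B) (fun _ _ => rfl)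
        (N.star (Prod.map id (fun u : B × X => (u, u.2)) : A × (B × X) → A × ((B × X) × X))
          (fun _ _ => rfl) (N.act r (φ.app (B × X) m)))
      = N.act r (N.costar (Prod.fst : B × X → B) (fun _ _ => rfl)
          (N.star (fun u : B × X => (u, u.2)) (fun _ _ => rfl) (φ.app (B × X) m)))
    rw [N.act_costar_right (f := (Prod.fst : B × X → B)) (hf := fun _ _ => rfl)
        (hf' := fun _ _ => rfl) (r := r),
      N.act_star_right (f := fun u : B × X => (u, u.2)) (hf := fun _ _ => rfl)
        (hf' := fun _ _ => rfl) (r := r) (m := φ.app (B × X) m)]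


theorem adjInv_adjFun {M N : RModule R} (θ : RModHom R (MXmod X M) N) :
    adjInv X (adjFun X θ) = θ := by
  refine hom_ext fun A _ _ v => ?_
  show N.costar (Prod.fst : A × X → A) (fun _ _ => rfl)
    (N.star (fun u : A × X => (u, u.2)) (fun _ _ => rfl)
      (θ.app ((A × X) × X)
        (M.costar (fun w : (A × X) × X => (w, w.2)) (fun _ _ => rfl)
          (M.star (Prod.fst : (A × X) × X → A × X) (fun _ _ => rfl) v)))) = θ.app A v
  rw [← θ.nat_star (fun u : A × X => (u, u.2)) (fun _ _ => rfl)
      (M.costar (fun w : (A × X) × X => (w, w.2)) (fun _ _ => rfl)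
        (M.star (Prod.fst : (A × X) × X → A × X) (fun _ _ => rfl) v)),
    ← θ.nat_costar (Prod.fst : A × X → A) (fun _ _ => rfl)
      ((MXmod X M).star (fun u : A × X => (u, u.2)) (fun _ _ => rfl)
        (M.costar (fun w : (A × X) × X => (w, w.2)) (fun _ _ => rfl)
          (M.star (Prod.fst : (A × X) × X → A × X) (fun _ _ => rfl) v)))]
  refine congrArg (fun t => θ.app A t) ?_
  show M.costar (Prod.map Prod.fst id : (A × X) × X → A × X) (fun _ _ => rfl)
    (M.star (Prod.map (fun u : A × X => (u, u.2)) id : (A × X) × X → ((A × X) × X) × X)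
      (fun _ _ => rfl)
      (M.costar (fun w : (A × X) × X => (w, w.2)) (fun _ _ => rfl)
        (M.star (Prod.fst : (A × X) × X → A × X) (fun _ _ => rfl) v))) = v
  rw [M.pullback (p := fun u : A × X => (u, u.2)) (hp := fun _ _ => rfl)
    (q := fun u : A × X => (u, u.2)) (hq := fun _ _ => rfl)
    (f := fun w : (A × X) × X => (w, w.2)) (hf := fun _ _ => rfl)
    (k := (Prod.map (fun u : A × X => (u, u.2)) id : (A × X) × X → ((A × X) × X) × X))
    (hk := fun _ _ => rfl) (fun w => rfl)
    (by
      rintro ⟨⟨xa, xx1⟩, xx2⟩ ⟨⟨ya, yx1⟩, yx2⟩ h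
      obtain ⟨h1, h2, h3, h4⟩ : xa = ya ∧ xx1 = yx1 ∧ xx2 = yx1 ∧ xx2 = yx2 := by
        simpa [Prod.map, Prod.ext_iff, and_assoc] using h
      refine ⟨(xa, xx1), ⟨by simp [h2.trans h3.symm], by simp [h1, h2, h3.symm.trans h4]⟩, ?_⟩
      rintro ⟨wa, wx⟩ ⟨ha, hb⟩
      obtain ⟨ha1, ha2, _⟩ : wa = xa ∧ wx = xx1 ∧ wx = xx2 := by
        simpa [Prod.ext_iff, and_assoc] using ha
      simp [ha1, ha2])
    (M.star (Prod.fst : (A × X) × X → A × X) (fun _ _ => rfl) v)]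
  rw [M.star_comp (fun u : A × X => (u, u.2)) (fun _ _ => rfl)
      (Prod.fst : (A × X) × X → A × X) (fun _ _ => rfl) (fun _ _ => rfl) v,
    M.star_congr (f' := id) (by funext u; rfl) _ (fun _ _ => rfl) v, M.star_id _ _ v,
    M.costar_comp (fun u : A × X => (u, u.2)) (fun _ _ => rfl)
      (Prod.map Prod.fst id : (A × X) × X → A × X) (fun _ _ => rfl) (fun _ _ => rfl) v,
    M.costar_congr (f' := id) (by funext u; rfl) _ (fun _ _ => rfl) v, M.costar_id _ _ v]

theorem adjFun_adjInv {M N : RModule R} (φ : RModHom R M (MXmod X N)) :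
    adjFun X (adjInv X φ) = φ := by
  refine hom_ext fun A _ _ v => ?_
  show N.costar (Prod.fst : (A × X) × X → A × X) (fun _ _ => rfl)
    (N.star (fun w : (A × X) × X => (w, w.2)) (fun _ _ => rfl)
      (φ.app ((A × X) × X)
        (M.costar (fun u : A × X => (u, u.2)) (fun _ _ => rfl)
          (M.star (Prod.fst : A × X → A) (fun _ _ => rfl) v)))) = φ.app A v
  rw [φ.nat_costar (fun u : A × X => (u, u.2)) (fun _ _ => rfl)
      (M.star (Prod.fst : A × X → A) (fun _ _ => rfl) v),
    φ.nat_star (Prod.fst : A × X → A) (fun _ _ => rfl) v]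
  rw [show (MXmod X N).star (Prod.fst : A × X → A) (fun _ _ => rfl) (φ.app A v)
    = N.star (Prod.map Prod.fst id : (A × X) × X → A × X) (fun _ _ => rfl) (φ.app A v)
    from rfl]
  rw [show (MXmod X N).costar (fun u : A × X => (u, u.2)) (fun _ _ => rfl)
      (N.star (Prod.map Prod.fst id : (A × X) × X → A × X) (fun _ _ => rfl) (φ.app A v))
    = N.costar (Prod.map (fun u : A × X => (u, u.2)) id : (A × X) × X → ((A × X) × X) × X)
        (fun _ _ => rfl)
        (N.star (Prod.map Prod.fst id : (A × X) × X → A × X) (fun _ _ => rfl) (φ.app A v))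
    from rfl]
  rw [N.pullback (p := fun u : A × X => (u, u.2)) (hp := fun _ _ => rfl)
    (q := fun u : A × X => (u, u.2)) (hq := fun _ _ => rfl)
    (f := (Prod.map (fun u : A × X => (u, u.2)) id : (A × X) × X → ((A × X) × X) × X))
    (hf := fun _ _ => rfl)
    (k := fun w : (A × X) × X => (w, w.2)) (hk := fun _ _ => rfl) (fun w => rfl)
    (by
      rintro ⟨⟨xa, xx1⟩, xx2⟩ ⟨⟨ya, yx1⟩, yx2⟩ h
      obtain ⟨h1, h2, h3, h4⟩ : xa = ya ∧ xx1 = yx1 ∧ xx1 = yx2 ∧ xx2 = yx2 := by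
        simpa [Prod.map, Prod.ext_iff, and_assoc] using h
      refine ⟨(xa, xx1), ⟨by simp [h3.trans h4.symm], by simp [h1, h2, h2.symm.trans h3]⟩, ?_⟩
      rintro ⟨wa, wx⟩ ⟨ha, hb⟩
      obtain ⟨ha1, ha2, _⟩ : wa = xa ∧ wx = xx1 ∧ wx = xx2 := by
        simpa [Prod.ext_iff, and_assoc] using ha
      simp [ha1, ha2])
    (N.star (Prod.map Prod.fst id : (A × X) × X → A × X) (fun _ _ => rfl) (φ.app A v))]
  rw [N.star_comp (fun u : A × X => (u, u.2)) (fun _ _ => rfl)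
      (Prod.map Prod.fst id : (A × X) × X → A × X) (fun _ _ => rfl) (fun _ _ => rfl)
      (φ.app A v),
    N.star_congr (f' := id) (by funext u; rfl) _ (fun _ _ => rfl) (φ.app A v), N.star_id _ _ (φ.app A v),
    N.costar_comp (fun u : A × X => (u, u.2)) (fun _ _ => rfl)
      (Prod.fst : (A × X) × X → A × X) (fun _ _ => rfl) (fun _ _ => rfl) (φ.app A v),
    N.costar_congr (f' := id) (by funext u; rfl) _ (fun _ _ => rfl) (φ.app A v), N.costar_id _ _ (φ.app A v)]

end Stmt15

end Construction

/-- Let `G` be a finite group, `R` a commutative Green functor for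
`G`, and `X` a finite `G`-set.  The functor `M ↦ M_X` on `R`-Mackey modules, where
`M_X(Y) = M(Y × X)`, is its own left and right adjoint: there are bijections
`R-Mac(M_X, N) ≅ R-Mac(M, N_X)`, natural in `M` and `N`. -/
theorem stmt15 {G : Type} [Group G] [Finite G] (R : GreenFun G)
    (X : Type) [Finite X] [MulAction G X] :
    ∃ (MX : RModule R → RModule R)
      (MXMap : ∀ {M N : RModule R}, RModHom R M N → RModHom R (MX M) (MX N))
      (hval : ∀ (M : RModule R) (Y : Type) [Finite Y] [MulAction G Y],
        (MX M).val Y = M.val (Y × X)),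
      -- the hom action of `M ↦ M_X` is the evident one
      (∀ (M N : RModule R) (φ : RModHom R M N) (Y : Type) [Finite Y]
        [MulAction G Y] (v : (MX M).val Y),
        (MXMap φ).app Y v =
          cast (hval N Y).symm (φ.app (Y × X) (cast (hval M Y) v))) ∧
      -- the self-adjunction `R-Mac(M_X, N) ≃ R-Mac(M, N_X)`, natural in `M` and `N`
      (∃ adj : ∀ M N : RModule R, RModHom R (MX M) N ≃ RModHom R M (MX N),
        (∀ (M N N' : RModule R) (ψ : RModHom R N N') (θ : RModHom R (MX M) N),
          adj M N' (ψ.comp θ) = (MXMap ψ).comp (adj M N θ)) ∧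
        (∀ (M M' N : RModule R) (φ : RModHom R M' M) (θ : RModHom R (MX M) N),
          adj M' N (θ.comp (MXMap φ)) = (adj M N θ).comp φ)) := by
  refine ⟨Stmt15.MXmod X, fun {M N} φ => Stmt15.MXmap X φ, fun M Y _ _ => rfl,
    fun M N φ Y _ _ v => rfl, ?_⟩
  refine ⟨fun M N => ⟨Stmt15.adjFun X, Stmt15.adjInv X, Stmt15.adjInv_adjFun X,
    Stmt15.adjFun_adjInv X⟩, ?_, ?_⟩
  · intro M N N' ψ θ
    exact Stmt15.hom_ext fun A _ _ v => rfl
  · intro M M' N φ θ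
    refine Stmt15.hom_ext fun A _ _ v => ?_
    show θ.app (A × X) (φ.app ((A × X) × X)
        (M'.costar (fun u : A × X => (u, u.2)) (fun _ _ => rfl)
          (M'.star (Prod.fst : A × X → A) (fun _ _ => rfl) v)))
      = θ.app (A × X) (M.costar (fun u : A × X => (u, u.2)) (fun _ _ => rfl)
          (M.star (Prod.fst : A × X → A) (fun _ _ => rfl) (φ.app A v)))
    rw [φ.nat_costar (fun u : A × X => (u, u.2)) (fun _ _ => rfl)
        (M'.star (Prod.fst : A × X → A) (fun _ _ => rfl) v),
      φ.nat_star (Prod.fst : A × X → A) (fun _ _ => rfl) v]
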